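/- arXiv:math/0703111 — 6 statements merged into one kernel-verified Lean document; each statement's English description precedes it below -/
import Mathlib

section
/- There exists a constant C > 0 such that for every positive integer p and every integer m ≥ 2, the sum S_m² := Σ_{k=0}^m ∏_{j=1}^p (k+j)^{-2}(m-k+j)^{-2} satisfies S_m² ≤ C/m^{2p}, where C may depend on p but not on m. -/
open Finset

lemma sum_inv_sq_le (n : ℕ) :
    ∑ k ∈ range n, (((k : ℝ) + 1) ^ 2)⁻¹ ≤ 2 - 2 / ((n : ℝ) + 1) := by
  induction n with
  | zero => norm_num
  | succ n ih =>
    rw [sum_range_succ]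
    push_cast
    have h1 : (0:ℝ) < (n : ℝ) + 1 := by positivity
    have h2 : (0:ℝ) < (n : ℝ) + 2 := by positivity
    have h3 : (((n:ℝ)+1)^2) * (((n:ℝ)+1)^2)⁻¹ = 1 := mul_inv_cancel₀ (by positivity)
    have key : (((n:ℝ)+1)^2)⁻¹ ≤ 2 / ((n:ℝ)+1) - 2 / ((n:ℝ)+2) := by
      rw [div_sub_div _ _ (ne_of_gt h1) (ne_of_gt h2), le_div_iff₀ (by positivity)]
      nlinarith [h3, sq_nonneg ((n:ℝ)+1)]
    rw [show ((n:ℝ)+1+1) = (n:ℝ)+2 by ring]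
    linarith [ih, key]

lemma sumf0 (m : ℕ) (hm : 2 ≤ m) :
    ∑ k ∈ range (m + 1), ((((k : ℝ) + 1) ^ 2 * ((m : ℝ) - k + 1) ^ 2))⁻¹
      ≤ 8 / (m : ℝ) ^ 2 := by
  have hm0 : (0:ℝ) < m := by positivity
  have step : ∀ k ∈ range (m + 1),
      ((((k : ℝ) + 1) ^ 2 * ((m : ℝ) - k + 1) ^ 2))⁻¹
        ≤ 2 / ((m:ℝ)+2)^2 * ((((k : ℝ) + 1) ^ 2)⁻¹ + (((m : ℝ) - k + 1) ^ 2)⁻¹) := by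
    intro k hk
    rw [mem_range] at hk
    have hkm : (k:ℝ) ≤ m := by exact_mod_cast Nat.lt_succ_iff.mp hk
    set a : ℝ := (k:ℝ) + 1 with ha
    set b : ℝ := (m:ℝ) - k + 1 with hb
    have hA : 0 < a := by positivity
    have hB : 0 < b := by simp [hb]; linarith
    have hab : a + b = (m:ℝ) + 2 := by ring
    rw [← hab]
    have hA' : a ≠ 0 := ne_of_gt hA
    have hB' : b ≠ 0 := ne_of_gt hB
    have hab' : a + b ≠ 0 := by positivity
    have hineq : (a+b)^2 * (a^2*b^2) ≤ 2*(a^2+b^2) * (a^2*b^2) := by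
      apply mul_le_mul_of_nonneg_right _ (by positivity)
      nlinarith [sq_nonneg (a - b)]
    rw [inv_eq_one_div, inv_eq_one_div, inv_eq_one_div,
      div_add_div _ _ (pow_ne_zero 2 hA') (pow_ne_zero 2 hB'), div_mul_div_comm,
      div_le_div_iff₀ (by positivity) (by positivity)]
    nlinarith [hineq]
  calc ∑ k ∈ range (m + 1), ((((k : ℝ) + 1) ^ 2 * ((m : ℝ) - k + 1) ^ 2))⁻¹
      ≤ ∑ k ∈ range (m + 1),
          2 / ((m:ℝ)+2)^2 * ((((k : ℝ) + 1) ^ 2)⁻¹ + (((m : ℝ) - k + 1) ^ 2)⁻¹) :=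
        Finset.sum_le_sum step
    _ = 2 / ((m:ℝ)+2)^2 * (∑ k ∈ range (m + 1), (((k : ℝ) + 1) ^ 2)⁻¹
          + ∑ k ∈ range (m + 1), (((m : ℝ) - k + 1) ^ 2)⁻¹) := by
        rw [← Finset.mul_sum, Finset.sum_add_distrib]
    _ ≤ 8 / (m : ℝ) ^ 2 := by
        have hrefl : ∑ k ∈ range (m + 1), (((m : ℝ) - k + 1) ^ 2)⁻¹
            = ∑ k ∈ range (m + 1), (((k : ℝ) + 1) ^ 2)⁻¹ := by
          rw [← Finset.sum_range_reflect (fun j => (((j : ℝ) + 1) ^ 2)⁻¹) (m+1)]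
          apply Finset.sum_congr rfl
          intro k hk
          rw [mem_range] at hk
          have hkm : k ≤ m := Nat.lt_succ_iff.mp hk
          congr 2
          have : m + 1 - 1 - k = m - k := by omega
          rw [this]
          push_cast [hkm]
          ring
        rw [hrefl]
        have hs := sum_inv_sq_le (m + 1)
        have hs2 : ∑ k ∈ range (m + 1), (((k : ℝ) + 1) ^ 2)⁻¹ ≤ 2 := by
          have : (0:ℝ) < ((m:ℝ)+1)+1 := by positivity
          have h4 : 0 ≤ 2 / (((m:ℝ)+1) + 1) := by positivity
          push_cast at hs
          linarith
        have hnn : 0 ≤ ∑ k ∈ range (m + 1), (((k : ℝ) + 1) ^ 2)⁻¹ := by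
          apply Finset.sum_nonneg; intro i _; positivity
        have h5 : 2 / ((m:ℝ)+2)^2 ≤ 2 / (m:ℝ)^2 := by
          apply div_le_div_of_nonneg_left (by norm_num) (by positivity)
          nlinarith
        calc 2 / ((m:ℝ)+2)^2 * (∑ k ∈ range (m + 1), (((k : ℝ) + 1) ^ 2)⁻¹
              + ∑ k ∈ range (m + 1), (((k : ℝ) + 1) ^ 2)⁻¹)
            ≤ 2 / ((m:ℝ))^2 * (2 + 2) := by
              apply mul_le_mul h5 (by linarith) (by linarith) (by positivity)
          _ = 8 / (m : ℝ) ^ 2 := by ring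

theorem Sm_sq_le (p : ℕ) (hp : 1 ≤ p) :
    ∃ C > 0, ∀ m : ℕ, 2 ≤ m →
      (∑ k ∈ Finset.range (m + 1),
          ∏ j ∈ Finset.range p,
            (((k : ℝ) + j + 1) ^ 2 * ((m : ℝ) - k + j + 1) ^ 2)⁻¹)
        ≤ C / (m : ℝ) ^ (2 * p) := by
  obtain ⟨q, rfl⟩ : ∃ q, p = q + 1 := ⟨p - 1, (Nat.succ_pred_eq_of_pos hp).symm⟩
  refine ⟨8, by norm_num, fun m hm => ?_⟩
  have hm0 : (0:ℝ) < m := by positivity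
  have hterm : ∀ k ∈ range (m + 1),
      ∏ j ∈ Finset.range (q + 1),
          (((k : ℝ) + j + 1) ^ 2 * ((m : ℝ) - k + j + 1) ^ 2)⁻¹
        ≤ ((((k : ℝ) + 1) ^ 2 * ((m : ℝ) - k + 1) ^ 2))⁻¹ * (((m:ℝ)^2)⁻¹)^q := by
    intro k hk
    rw [mem_range] at hk
    have hkm : (k:ℝ) ≤ m := by exact_mod_cast Nat.lt_succ_iff.mp hk
    rw [Finset.prod_range_succ']
    have h0 : (((k : ℝ) + (0:ℕ) + 1) ^ 2 * ((m : ℝ) - k + (0:ℕ) + 1) ^ 2)⁻¹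
        = ((((k : ℝ) + 1) ^ 2 * ((m : ℝ) - k + 1) ^ 2))⁻¹ := by norm_num
    rw [h0, mul_comm]
    apply mul_le_mul_of_nonneg_left _ (by positivity)
    calc ∏ j ∈ Finset.range q,
          (((k : ℝ) + (j+1:ℕ) + 1) ^ 2 * ((m : ℝ) - k + (j+1:ℕ) + 1) ^ 2)⁻¹
        ≤ ∏ j ∈ Finset.range q, ((m:ℝ)^2)⁻¹ := by
          apply Finset.prod_le_prod
          · intro j _
            have : (0:ℝ) < (m : ℝ) - k + (j+1:ℕ) + 1 := by push_cast; linarith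
            positivity
          · intro j _
            have hb : (0:ℝ) < (m : ℝ) - k + (j+1:ℕ) + 1 := by push_cast; linarith
            have ha : (0:ℝ) < (k : ℝ) + (j+1:ℕ) + 1 := by positivity
            apply inv_anti₀ (by positivity)
            have hj : (1:ℝ) ≤ (j+1:ℕ) := by exact_mod_cast Nat.one_le_iff_ne_zero.mpr (Nat.succ_ne_zero j)
            have hk0 : (0:ℝ) ≤ (k:ℝ) := Nat.cast_nonneg k
            have hc : (1:ℝ) ≤ ((j+1:ℕ):ℝ) := hj
            have hprod : (m:ℝ) ≤ ((k : ℝ) + (j+1:ℕ) + 1) * ((m : ℝ) - k + (j+1:ℕ) + 1) := by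
              nlinarith [mul_nonneg hk0 (sub_nonneg.mpr hkm), hc]
            have hsq := mul_le_mul hprod hprod (le_of_lt hm0)
              (le_trans (le_of_lt hm0) hprod)
            nlinarith [hsq]
      _ = (((m:ℝ)^2)⁻¹)^q := by rw [Finset.prod_const, Finset.card_range]
  calc (∑ k ∈ Finset.range (m + 1),
          ∏ j ∈ Finset.range (q + 1),
            (((k : ℝ) + j + 1) ^ 2 * ((m : ℝ) - k + j + 1) ^ 2)⁻¹)
      ≤ ∑ k ∈ Finset.range (m + 1),
          ((((k : ℝ) + 1) ^ 2 * ((m : ℝ) - k + 1) ^ 2))⁻¹ * (((m:ℝ)^2)⁻¹)^q :=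
        Finset.sum_le_sum hterm
    _ = (∑ k ∈ Finset.range (m + 1),
          ((((k : ℝ) + 1) ^ 2 * ((m : ℝ) - k + 1) ^ 2))⁻¹) * (((m:ℝ)^2)⁻¹)^q := by
        rw [Finset.sum_mul]
    _ ≤ (8 / (m:ℝ)^2) * (((m:ℝ)^2)⁻¹)^q := by
        apply mul_le_mul_of_nonneg_right (sumf0 m hm) (by positivity)
    _ = 8 / (m : ℝ) ^ (2 * (q + 1)) := by
        rw [pow_mul]
        field_simp
        ring_nf
        rw [mul_assoc, ← mul_pow, mul_inv_cancel₀ hm0.ne', one_pow, mul_one]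
end

section
/- Let A be a complex number with AB = -1 for B complex, and let m ≥ 4 be an even integer. Then the 3×3 determinant N_m := det [[-2, (-1)^{m-1}-1, (-1)^m-1], [A-1, A^{m-1}-1, A^m-1], [B-1, B^{m-1}-1, B^m-1]] satisfies A^m · N_m = 4A(A^m-1)(A^{m-2}-1). -/
open Matrix

theorem det_Nm_even (A B : ℂ) (hAB : A * B = -1) (m : ℕ) (hm : 4 ≤ m)
    (hme : Even m) :
    A ^ m *
        (!![(-2 : ℂ), (-1 : ℂ) ^ (m - 1) - 1, (-1 : ℂ) ^ m - 1;
            A - 1, A ^ (m - 1) - 1, A ^ m - 1;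
            B - 1, B ^ (m - 1) - 1, B ^ m - 1]).det
      = 4 * A * (A ^ m - 1) * (A ^ (m - 2) - 1) := by
  have hA : A ≠ 0 := by
    intro h; rw [h, zero_mul] at hAB; exact absurd hAB (by norm_num)
  have hB : B = -A⁻¹ := by
    field_simp
    linear_combination hAB
  have hmo : Odd (m - 1) := by
    obtain ⟨k, hk⟩ := hme
    have hk1 : 1 ≤ k := by omega
    exact ⟨k - 1, by omega⟩
  have h1 : A ^ (m - 1) = A ^ (m - 2) * A := by
    rw [← pow_succ]; congr 1; omega
  have h2 : A ^ m = A ^ (m - 2) * A * A := by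
    rw [← pow_succ, ← pow_succ]; congr 1; omega
  have hBm1 : B ^ (m - 1) = -(A ^ (m - 2) * A)⁻¹ := by
    rw [hB, neg_pow, hmo.neg_one_pow, inv_pow, ← h1]; ring
  have hBm : B ^ m = (A ^ (m - 2) * A * A)⁻¹ := by
    rw [hB, neg_pow, hme.neg_one_pow, inv_pow, ← h2]; ring
  rw [det_fin_three]
  simp only [of_apply, cons_val', cons_val_zero, cons_val_one, cons_val_two, empty_val', cons_val_fin_one, vecHead, vecTail, Function.comp_apply, Fin.succ_zero_eq_one, Fin.succ_one_eq_two]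
  rw [hmo.neg_one_pow, hme.neg_one_pow, hBm1, hBm, hB, h1, h2]
  have hx : A ^ (m - 2) ≠ 0 := pow_ne_zero _ hA
  generalize A ^ (m - 2) = x at hx ⊢
  simp only [mul_inv]
  field_simp
  ring
end

section
/- Let A be a nonzero complex number, B = -1/A, and let m be an odd integer. Then the 3×3 determinant N_m := det [[-2, (-1)^{m-1}-1, (-1)^m-1], [A-1, A^{m-1}-1, A^m-1], [B-1, B^{m-1}-1, B^m-1]] satisfies A^m · N_m = -2(A^{m-1}-1)²(A²+1). -/
open Matrix

theorem det_Nm_odd (A : ℂ) (hA : A ≠ 0) (B : ℂ) (hB : B = -1 / A)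
    (m : ℕ) (hm : 1 ≤ m) (hmo : Odd m) :
    A ^ m *
        (!![(-2 : ℂ), (-1 : ℂ) ^ (m - 1) - 1, (-1 : ℂ) ^ m - 1;
            A - 1, A ^ (m - 1) - 1, A ^ m - 1;
            B - 1, B ^ (m - 1) - 1, B ^ m - 1]).det
      = -2 * (A ^ (m - 1) - 1) ^ 2 * (A ^ 2 + 1) := by
  obtain ⟨k, rfl⟩ := hmo
  subst hB
  have h1 : 2 * k + 1 - 1 = 2 * k := by omega
  rw [det_fin_three]
  simp only [h1, Matrix.of_apply, Matrix.cons_val', Matrix.cons_val_zero, Matrix.cons_val_one, Matrix.head_cons,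
    Matrix.empty_val', Matrix.cons_val_fin_one, Matrix.head_fin_const,
    Matrix.cons_val_two, Matrix.tail_cons, Matrix.head_fin_const]
  have e1 : ((-1 : ℂ)) ^ (2 * k) = 1 := by
    rw [pow_mul]; norm_num
  have e2 : ((-1 : ℂ)) ^ (2 * k + 1) = -1 := by
    rw [pow_succ, e1]; ring
  have e3 : ((-1 : ℂ) / A) ^ (2 * k) = 1 / A ^ (2 * k) := by
    rw [div_pow, e1]
  have e4 : ((-1 : ℂ) / A) ^ (2 * k + 1) = -1 / A ^ (2 * k + 1) := by
    rw [div_pow, e2]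
  have e5 : (-1 : ℂ) / A = -1 / A := rfl
  rw [neg_div, ← neg_div] at *
  rw [e1, e2, e3, e4]
  have hA2k : A ^ (2 * k) ≠ 0 := pow_ne_zero _ hA
  have hA2k1 : A ^ (2 * k + 1) ≠ 0 := pow_ne_zero _ hA
  field_simp
  ring
end

section
/- Let A = e^{2πiβ} with β real and B = -1/A, and suppose |A^m - 1| ≥ C'/m^{μ-1} for all positive integers m, for some C' > 0 and μ ≥ 2. Then there is a constant D > 0 such that the determinant N_m := det [[-2, (-1)^{m-1}-1, (-1)^m-1], [A-1, A^{m-1}-1, A^m-1], [B-1, B^{m-1}-1, B^m-1]] satisfies |N_m| ≥ D/m^{2μ-2} for all integers m ≥ 3. -/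
open Complex Real Matrix

theorem det_Nm_lower_bound (β : ℝ) (A : ℂ)
    (hA : A = Complex.exp (2 * Real.pi * Complex.I * β))
    (B : ℂ) (hB : B = -1 / A) (C' μ : ℝ) (hC' : 0 < C') (hμ : 2 ≤ μ)
    (h : ∀ m : ℕ, 1 ≤ m → C' / (m : ℝ) ^ (μ - 1) ≤ ‖A ^ m - 1‖) :
    ∃ D > 0, ∀ m : ℕ, 3 ≤ m →
      D / (m : ℝ) ^ (2 * μ - 2) ≤
        ‖(!![(-2 : ℂ), (-1 : ℂ) ^ (m - 1) - 1, (-1 : ℂ) ^ m - 1;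
              A - 1, A ^ (m - 1) - 1, A ^ m - 1;
              B - 1, B ^ (m - 1) - 1, B ^ m - 1]).det‖ := by
  have hA0 : A ≠ 0 := by rw [hA]; exact Complex.exp_ne_zero _
  have hAabs : ‖A‖ = 1 := by
    rw [hA, Complex.norm_exp]
    simp [Complex.mul_re, Complex.mul_im]
  have hAB : A * B = -1 := by rw [hB]; field_simp
  have hA2 : A ^ 2 + 1 ≠ 0 := by
    intro hc
    have h4 := h 4 (by norm_num)
    have hA4 : A ^ 4 = 1 := by
      have h2 : A ^ 2 = -1 := by linear_combination hc
      calc A ^ 4 = (A ^ 2) ^ 2 := by ring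
        _ = 1 := by rw [h2]; ring
    rw [hA4] at h4
    simp only [sub_self, norm_zero] at h4
    have : (0 : ℝ) < C' / ((4 : ℕ) : ℝ) ^ (μ - 1) := by positivity
    linarith
  have hn2 : 0 < ‖A ^ 2 + 1‖ := norm_pos_iff.mpr hA2
  refine ⟨min (4 * C' ^ 2) (2 * ‖A ^ 2 + 1‖ * C' ^ 2), by positivity, ?_⟩
  intro m hm
  obtain ⟨n, rfl⟩ : ∃ n, m = n + 2 := ⟨m - 2, by omega⟩
  have hn1 : 1 ≤ n := by omega
  have hsub : n + 2 - 1 = n + 1 := rfl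
  have hmpos : (0 : ℝ) < ((n + 2 : ℕ) : ℝ) := by positivity
  have hnpos : (0 : ℝ) < ((n : ℕ) : ℝ) := by exact_mod_cast hn1
  have hμ1 : (0 : ℝ) ≤ μ - 1 := by linarith
  have hrp : (0 : ℝ) < ((n + 2 : ℕ) : ℝ) ^ (μ - 1) := Real.rpow_pos_of_pos hmpos _
  set t : ℝ := C' / ((n + 2 : ℕ) : ℝ) ^ (μ - 1) with ht_def
  have ht : 0 < t := by positivity
  have hsq : ((n + 2 : ℕ) : ℝ) ^ (2 * μ - 2) =
      ((n + 2 : ℕ) : ℝ) ^ (μ - 1) * ((n + 2 : ℕ) : ℝ) ^ (μ - 1) := by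
    rw [← Real.rpow_add hmpos]; ring_nf
  obtain ⟨a, hae⟩ : ∃ a, A ^ n = a := ⟨_, rfl⟩
  obtain ⟨b, hbe⟩ : ∃ b, B ^ n = b := ⟨_, rfl⟩
  have e1 : A ^ (n + 1) = a * A := by rw [← hae]; ring
  have e2 : A ^ (n + 2) = a * A ^ 2 := by rw [← hae]; ring
  have e3 : B ^ (n + 1) = b * B := by rw [pow_succ, hbe]
  have e4 : B ^ (n + 2) = b * B ^ 2 := by rw [pow_add, hbe]
  rcases Nat.even_or_odd n with he | ho
  · -- even case : m = n + 2 even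
    have hmn : (-1 : ℂ) ^ (n + 2) = 1 := (he.add (by norm_num)).neg_one_pow
    have hmn1 : (-1 : ℂ) ^ (n + 1) = -1 := by
      have : Odd (n + 1) := Even.add_one he
      exact this.neg_one_pow
    have hab : a * b = 1 := by
      rw [← hae, ← hbe, ← mul_pow, hAB]; exact he.neg_one_pow
    have key : A ^ (n + 2) *
        (!![(-2 : ℂ), (-1 : ℂ) ^ (n + 2 - 1) - 1, (-1 : ℂ) ^ (n + 2) - 1;
            A - 1, A ^ (n + 2 - 1) - 1, A ^ (n + 2) - 1;
            B - 1, B ^ (n + 2 - 1) - 1, B ^ (n + 2) - 1]).det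
        = 4 * A * (A ^ (n + 2) - 1) * (A ^ n - 1) := by
      rw [hae, Matrix.det_fin_three]
      simp only [Matrix.cons_val', Matrix.cons_val_zero, Matrix.cons_val_one,
        Matrix.head_cons, Matrix.empty_val', Matrix.cons_val_fin_one,
        Matrix.head_fin_const, Matrix.cons_val_two, Matrix.tail_cons,
        Matrix.of_apply, hsub]
      rw [hmn, hmn1, e1, e2, e3, e4]
      linear_combination
        (-2*A^2*B + 2*A^3*B^2 - 2*a*A^3*B^2 + 2*a*A^4*B) * hab +
        (-4*A + 2*A^2*B + 4*a*A - 2*a*A^2*B + 2*a*A^3 - 2*a^2*A^3) * hAB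
    have hnorm : ‖(!![(-2 : ℂ), (-1 : ℂ) ^ (n + 2 - 1) - 1, (-1 : ℂ) ^ (n + 2) - 1;
            A - 1, A ^ (n + 2 - 1) - 1, A ^ (n + 2) - 1;
            B - 1, B ^ (n + 2 - 1) - 1, B ^ (n + 2) - 1]).det‖
        = 4 * ‖A ^ (n + 2) - 1‖ * ‖A ^ n - 1‖ := by
      have hk := congrArg norm key
      rw [norm_mul, norm_pow, hAabs, one_pow, one_mul] at hk
      have h4 : ‖(4 : ℂ)‖ = 4 := by norm_num
      rw [hk, norm_mul, norm_mul, norm_mul, hAabs, h4, mul_one]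
    rw [hnorm]
    have h1 : t ≤ ‖A ^ (n + 2) - 1‖ := h (n + 2) (by omega)
    have h2 : t ≤ ‖A ^ n - 1‖ := by
      refine le_trans ?_ (h n hn1)
      apply div_le_div_of_nonneg_left hC'.le (Real.rpow_pos_of_pos hnpos _)
      exact Real.rpow_le_rpow hnpos.le (by exact_mod_cast Nat.le_add_right n 2) hμ1
    calc min (4 * C' ^ 2) (2 * ‖A ^ 2 + 1‖ * C' ^ 2) / ((n + 2 : ℕ) : ℝ) ^ (2 * μ - 2)
        ≤ (4 * C' ^ 2) / ((n + 2 : ℕ) : ℝ) ^ (2 * μ - 2) := by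
          gcongr; exact min_le_left _ _
      _ = 4 * t * t := by rw [hsq, ht_def]; field_simp
      _ ≤ 4 * ‖A ^ (n + 2) - 1‖ * ‖A ^ n - 1‖ := by
          have h0 : (0:ℝ) ≤ ‖A ^ (n + 2) - 1‖ := norm_nonneg _
          nlinarith
  · -- odd case
    have hmn : (-1 : ℂ) ^ (n + 2) = -1 := by
      have : Odd (n + 2) := ho.add_even (by norm_num)
      exact this.neg_one_pow
    have hmn1 : (-1 : ℂ) ^ (n + 1) = 1 := by
      have : Even (n + 1) := ho.add_one
      exact this.neg_one_pow
    have hab : a * b = -1 := by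
      rw [← hae, ← hbe, ← mul_pow, hAB]; exact ho.neg_one_pow
    have key : A ^ (n + 2) *
        (!![(-2 : ℂ), (-1 : ℂ) ^ (n + 2 - 1) - 1, (-1 : ℂ) ^ (n + 2) - 1;
            A - 1, A ^ (n + 2 - 1) - 1, A ^ (n + 2) - 1;
            B - 1, B ^ (n + 2 - 1) - 1, B ^ (n + 2) - 1]).det
        = -2 * (A ^ (n + 1) - 1) ^ 2 * (A ^ 2 + 1) := by
      rw [Matrix.det_fin_three]
      simp only [Matrix.cons_val', Matrix.cons_val_zero, Matrix.cons_val_one,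
        Matrix.head_cons, Matrix.empty_val', Matrix.cons_val_fin_one,
        Matrix.head_fin_const, Matrix.cons_val_two, Matrix.tail_cons,
        Matrix.of_apply, hsub]
      rw [hmn, hmn1, e1, e2, e3, e4]
      linear_combination
        (2*A^2*B^2 - 2*A^3*B - 2*a*A^3*B^2 + 2*a*A^4*B) * hab +
        (2 - 2*A*B + 2*A^2 - 4*a*A + 2*a*A^2*B - 2*a*A^3 + 2*a^2*A^2) * hAB
    have hnorm : ‖(!![(-2 : ℂ), (-1 : ℂ) ^ (n + 2 - 1) - 1, (-1 : ℂ) ^ (n + 2) - 1;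
            A - 1, A ^ (n + 2 - 1) - 1, A ^ (n + 2) - 1;
            B - 1, B ^ (n + 2 - 1) - 1, B ^ (n + 2) - 1]).det‖
        = 2 * ‖A ^ (n + 1) - 1‖ ^ 2 * ‖A ^ 2 + 1‖ := by
      have hk := congrArg norm key
      rw [norm_mul, norm_pow, hAabs, one_pow, one_mul] at hk
      have h2 : ‖(-2 : ℂ)‖ = 2 := by norm_num
      rw [hk, norm_mul, norm_mul, norm_pow, h2]
    rw [hnorm]
    have hn1pos : (0 : ℝ) < ((n + 1 : ℕ) : ℝ) := by positivity
    have h1 : t ≤ ‖A ^ (n + 1) - 1‖ := by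
      refine le_trans ?_ (h (n + 1) (by omega))
      apply div_le_div_of_nonneg_left hC'.le (Real.rpow_pos_of_pos hn1pos _)
      refine Real.rpow_le_rpow hn1pos.le ?_ hμ1
      exact_mod_cast Nat.le_succ (n + 1)
    calc min (4 * C' ^ 2) (2 * ‖A ^ 2 + 1‖ * C' ^ 2) / ((n + 2 : ℕ) : ℝ) ^ (2 * μ - 2)
        ≤ (2 * ‖A ^ 2 + 1‖ * C' ^ 2) / ((n + 2 : ℕ) : ℝ) ^ (2 * μ - 2) := by
          gcongr; exact min_le_right _ _
      _ = 2 * t ^ 2 * ‖A ^ 2 + 1‖ := by rw [hsq, ht_def]; field_simp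
      _ ≤ 2 * ‖A ^ (n + 1) - 1‖ ^ 2 * ‖A ^ 2 + 1‖ := by
          have hsq2 : t ^ 2 ≤ ‖A ^ (n + 1) - 1‖ ^ 2 := by nlinarith
          nlinarith [hn2.le, hsq2]
end

section
/- Let β := Σ_{k=1}^∞ 10^{-p_k} with p_1 = 1 and p_{k+1} = p_k + k·10^{p_k}, and set A = e^{2πiβ}. Then liminf_{k→∞} |A^k - 1|^{1/k} = 0. -/
open Filter Complex Real

lemma Paux (P : ℕ → ℕ) (hP0 : P 0 = 1)
    (hPs : ∀ k : ℕ, P (k + 1) = P k + (k + 1) * 10 ^ (P k)) :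
    (∀ n, n + 1 ≤ P n) ∧ (∀ a j : ℕ, P a + j ≤ P (a + j)) := by
  have hstep : ∀ n, P n < P (n+1) := fun n => by
    have : 0 < (n+1) * 10 ^ P n := by positivity
    rw [hPs n]; omega
  have hadd : ∀ a j : ℕ, P a + j ≤ P (a + j) := by
    intro a j
    induction j with
    | zero => simp
    | succ j ih => have h2 := hstep (a + j); rw [show a + (j+1) = (a+j)+1 by omega]; omega
  refine ⟨fun n => by have := hadd 0 n; simp [hP0] at this; omega, hadd⟩

lemma key (P : ℕ → ℕ) (hP0 : P 0 = 1)
    (hPs : ∀ k : ℕ, P (k + 1) = P k + (k + 1) * 10 ^ (P k))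
    (β : ℝ) (hβ : β = ∑' k : ℕ, (10 : ℝ) ^ (-(P k : ℤ)))
    (A : ℂ) (hA : A = Complex.exp (2 * Real.pi * Complex.I * β)) (N : ℕ) :
    ‖A ^ (10 ^ P N) - 1‖ ≤ 8 * π * (10:ℝ) ^ (-(((N+1) * 10 ^ P N : ℕ) : ℤ)) := by
  obtain ⟨hP1, hadd⟩ := Paux P hP0 hPs
  have hmono : Monotone P := monotone_nat_of_le_succ (fun n => by rw [hPs n]; omega)
  set q : ℕ := 10 ^ P N with hqdef
  -- summability
  have hsumf : Summable (fun k : ℕ => (10 : ℝ) ^ (-(P k : ℤ))) := by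
    apply Summable.of_nonneg_of_le (fun k => by positivity)
      (fun k => ?_) (summable_geometric_of_lt_one (by norm_num : (0:ℝ) ≤ 1/10) (by norm_num))
    calc (10:ℝ) ^ (-(P k : ℤ)) ≤ (10:ℝ) ^ (-(k:ℤ)) := by
          apply zpow_le_zpow_right₀ (by norm_num)
          have := hP1 k; omega
      _ = (1/10:ℝ)^k := by
          rw [one_div, inv_pow, ← zpow_natCast (10:ℝ) k, ← zpow_neg]
  set F : ℕ → ℝ := fun k => (10:ℝ) ^ ((P N : ℤ) - P k) with hF
  have hFval : ∀ k, (10 : ℝ) ^ (-(P k : ℤ)) * (q:ℝ) = F k := by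
    intro k
    have : (q:ℝ) = (10:ℝ) ^ ((P N : ℤ)) := by
      rw [hqdef]; push_cast; rw [← zpow_natCast (10:ℝ) (P N)]
    rw [this, hF, ← zpow_add₀ (by norm_num : (10:ℝ) ≠ 0)]
    ring_nf
  have hsumF : Summable F := by
    exact (hsumf.mul_right (q:ℝ)).congr hFval
  have hβq : β * q = ∑' k, F k := by
    rw [hβ, ← tsum_mul_right]
    exact tsum_congr hFval
  -- integer part
  set m : ℕ := ∑ k ∈ Finset.range (N+1), 10 ^ (P N - P k) with hm
  have hmval : (m:ℝ) = ∑ k ∈ Finset.range (N+1), F k := by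
    rw [hm]; push_cast
    apply Finset.sum_congr rfl
    intro k hk
    simp only [Finset.mem_range] at hk
    have hle : P k ≤ P N := hmono (by omega)
    rw [hF, ← zpow_natCast (10:ℝ) (P N - P k)]
    congr 1
    omega
  set ε : ℝ := ∑' i, F (i + (N+1)) with hε
  have hsplit : (m:ℝ) + ε = β * q := by
    rw [hβq, hmval, hε]
    exact Summable.sum_add_tsum_nat_add (N+1) hsumF
  have hε0 : 0 ≤ ε := tsum_nonneg (fun i => by rw [hF]; positivity)
  set e : ℤ := (P N : ℤ) - P (N+1) with he
  have hεle : ε ≤ 2 * (10:ℝ) ^ e := by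
    have hg : Summable (fun i : ℕ => (10:ℝ)^e * (1/10)^i) :=
      (summable_geometric_of_lt_one (by norm_num) (by norm_num)).mul_left _
    have hle : ∀ i, F (i + (N+1)) ≤ (10:ℝ)^e * (1/10)^i := by
      intro i
      have h1 : P (N+1) + i ≤ P (i + (N+1)) := by
        have := hadd (N+1) i; rw [Nat.add_comm (N+1) i] at this; exact this
      calc F (i + (N+1)) ≤ (10:ℝ) ^ (e - i) := by
            rw [hF]
            apply zpow_le_zpow_right₀ (by norm_num)
            rw [he]; push_cast; omega
        _ = (10:ℝ)^e * (1/10)^i := by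
            rw [zpow_sub₀ (by norm_num : (10:ℝ) ≠ 0), div_eq_mul_inv, one_div,
              inv_pow, ← zpow_natCast (10:ℝ) i]
    calc ε ≤ ∑' i, (10:ℝ)^e * (1/10:ℝ)^i :=
          Summable.tsum_le_tsum hle ((summable_nat_add_iff (N+1)).2 hsumF) hg
      _ = (10:ℝ)^e * (1 - 1/10)⁻¹ := by
          rw [tsum_mul_left, tsum_geometric_of_lt_one (by norm_num) (by norm_num)]
      _ ≤ 2 * (10:ℝ)^e := by
          rw [show ((1:ℝ) - 1/10)⁻¹ = 10/9 by norm_num]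
          have : (0:ℝ) ≤ (10:ℝ)^e := by positivity
          nlinarith
  have hee : e = -(((N+1) * 10 ^ P N : ℕ) : ℤ) := by
    rw [he]; have := hPs N; push_cast [this]; ring
  -- A ^ q = exp(2πIε)
  have hAq : A ^ q = Complex.exp (2 * π * Complex.I * ε) := by
    rw [hA, ← Complex.exp_nat_mul]
    have h1 : (q:ℂ) * (2 * π * Complex.I * β) = 2 * π * Complex.I * ((β * q : ℝ) : ℂ) := by
      push_cast; ring
    rw [h1, ← hsplit]
    push_cast
    rw [show 2 * ↑π * Complex.I * ((m:ℂ) + (ε:ℂ)) = (m:ℤ) * (2 * ↑π * Complex.I) + 2 * ↑π * Complex.I * (ε:ℂ) by push_cast; ring]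
    rw [Complex.exp_add, Complex.exp_int_mul_two_pi_mul_I, one_mul]
  -- smallness of ε
  have he2 : (10:ℝ) ^ e ≤ (10:ℝ)^(-2:ℤ) := by
    apply zpow_le_zpow_right₀ (by norm_num)
    rw [hee]
    have h10 : 10 ≤ (N+1) * 10 ^ P N := by
      have h1 : 1 ≤ P N := hP1 N |>.trans' (by omega)
      have : 10 ≤ 10 ^ P N := by calc 10 = 10^1 := by norm_num
                                     _ ≤ 10 ^ P N := Nat.pow_le_pow_right (by norm_num) (by have := hP1 N; omega)
      nlinarith [Nat.one_le_iff_ne_zero.mpr (Nat.succ_ne_zero N)]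
    omega
  have hπ4 : π ≤ 4 := by linarith [Real.pi_le_four]
  have hπ0 : 0 < π := Real.pi_pos
  have habs : ‖2 * π * Complex.I * ε‖ = 2 * π * ε := by
    rw [norm_mul, norm_mul, norm_mul, Complex.norm_I, Complex.norm_real, Complex.norm_real,
      Complex.norm_two, Real.norm_of_nonneg hε0, Real.norm_of_nonneg hπ0.le]
    ring
  have hε2 : ε ≤ 1/50 := by
    have h2 : (10:ℝ)^e ≤ 1/100 := he2.trans (by norm_num)
    linarith
  have hsmall : ‖2 * π * Complex.I * ε‖ ≤ 1 := by
    rw [habs]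
    nlinarith [hπ0, hπ4, hε0, hε2]
  calc ‖A ^ q - 1‖ = ‖Complex.exp (2 * π * Complex.I * ε) - 1‖ := by
        rw [hAq]
    _ ≤ 2 * ‖2 * π * Complex.I * ε‖ := Complex.norm_exp_sub_one_le hsmall
    _ = 4 * π * ε := by rw [habs]; ring
    _ ≤ 8 * π * (10:ℝ) ^ (-(((N+1) * 10 ^ P N : ℕ) : ℤ)) := by
        rw [← hee]
        have := mul_le_mul_of_nonneg_left hεle (by positivity : (0:ℝ) ≤ 4*π)
        linarith

theorem liminf_zero (P : ℕ → ℕ) (hP0 : P 0 = 1)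
    (hPs : ∀ k : ℕ, P (k + 1) = P k + (k + 1) * 10 ^ (P k))
    (β : ℝ) (hβ : β = ∑' k : ℕ, (10 : ℝ) ^ (-(P k : ℤ)))
    (A : ℂ) (hA : A = Complex.exp (2 * Real.pi * Complex.I * β)) :
    Filter.liminf (fun k : ℕ => ‖A ^ k - 1‖ ^ (1 / (k : ℝ))) Filter.atTop = 0 := by
  have key := key P hP0 hPs β hβ A hA
  have hP1 := (Paux P hP0 hPs).1
  set f : ℕ → ℝ := fun k => ‖A ^ k - 1‖ ^ (1 / (k : ℝ)) with hf
  have hf0 : ∀ k, 0 ≤ f k := fun k => Real.rpow_nonneg (norm_nonneg _) _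
  have hπ0 : (0:ℝ) < π := Real.pi_pos
  -- bound along subsequence
  have hbound : ∀ N : ℕ, f (10 ^ P N) ≤ 8 * π * ((1:ℝ)/10) ^ (N+1) := by
    intro N
    set q : ℕ := 10 ^ P N with hq
    have hq1 : 1 ≤ q := Nat.one_le_iff_ne_zero.2 (by positivity)
    have hqR : (0:ℝ) < (q:ℝ) := by exact_mod_cast hq1
    have h8π : (1:ℝ) ≤ 8 * π := by nlinarith [Real.pi_gt_three]
    have step1 : f q ≤ (8 * π * (10:ℝ) ^ (-(((N+1) * q : ℕ) : ℤ))) ^ (1/(q:ℝ)) :=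
      Real.rpow_le_rpow (norm_nonneg _) (key N) (by positivity)
    have step2 : (8 * π * (10:ℝ) ^ (-(((N+1) * q : ℕ) : ℤ))) ^ (1/(q:ℝ))
        = (8 * π) ^ (1/(q:ℝ)) * ((10:ℝ) ^ (-(((N+1) * q : ℕ) : ℤ))) ^ (1/(q:ℝ)) :=
      Real.mul_rpow (by positivity) (by positivity)
    have step3 : ((10:ℝ) ^ (-(((N+1) * q : ℕ) : ℤ))) ^ (1/(q:ℝ)) = ((1:ℝ)/10) ^ (N+1) := by
      rw [← Real.rpow_intCast (10:ℝ) (-(((N+1) * q : ℕ) : ℤ)), ← Real.rpow_natCast ((1:ℝ)/10) (N+1),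
        ← Real.rpow_mul (by norm_num : (0:ℝ) ≤ 10)]
      rw [show ((1:ℝ)/10) = (10:ℝ) ^ (-1 : ℝ) by
        rw [Real.rpow_neg_one]; norm_num]
      rw [← Real.rpow_mul (by norm_num : (0:ℝ) ≤ 10)]
      congr 1
      push_cast
      field_simp
    have step4 : (8 * π) ^ (1/(q:ℝ)) ≤ 8 * π := by
      calc (8 * π) ^ (1/(q:ℝ)) ≤ (8 * π) ^ (1:ℝ) :=
            Real.rpow_le_rpow_of_exponent_le h8π (by
              rw [div_le_one hqR]; exact_mod_cast hq1)
        _ = 8 * π := Real.rpow_one _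
    calc f q ≤ (8 * π) ^ (1/(q:ℝ)) * ((1:ℝ)/10) ^ (N+1) := by
          rw [← step3]; exact step1.trans (le_of_eq step2)
      _ ≤ 8 * π * ((1:ℝ)/10) ^ (N+1) :=
          mul_le_mul_of_nonneg_right step4 (by positivity)
  -- norm of A
  have hnormA : ‖A‖ = 1 := by
    rw [hA, show (2 * (π:ℂ) * Complex.I * β) = ((2 * π * β : ℝ) : ℂ) * Complex.I by
      push_cast; ring]
    rw [Complex.norm_exp_ofReal_mul_I]
  have hf2 : ∀ k, f k ≤ 2 := by
    intro k
    rcases Nat.eq_zero_or_pos k with hk | hk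
    · subst hk
      simp [hf]
    · have h1 : ‖A ^ k - 1‖ ≤ 2 := by
        calc ‖A ^ k - 1‖ ≤ ‖A ^ k‖ + ‖(1:ℂ)‖ := norm_sub_le _ _
          _ = 2 := by rw [norm_pow, hnormA, one_pow, norm_one]; norm_num
      calc f k ≤ (2:ℝ) ^ (1/(k:ℝ)) := Real.rpow_le_rpow (norm_nonneg _) h1 (by positivity)
        _ ≤ (2:ℝ) ^ (1:ℝ) := Real.rpow_le_rpow_of_exponent_le (by norm_num) (by
            rw [div_le_one (by exact_mod_cast hk : (0:ℝ) < (k:ℝ))]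
            exact_mod_cast hk)
        _ = 2 := Real.rpow_one _
  -- tendsto of bound
  have ht : Tendsto (fun N : ℕ => 8 * π * ((1:ℝ)/10) ^ (N+1)) atTop (nhds 0) := by
    have h1 : Tendsto (fun N : ℕ => ((1:ℝ)/10) ^ N) atTop (nhds 0) :=
      tendsto_pow_atTop_nhds_zero_of_lt_one (by norm_num) (by norm_num)
    have h2 := (h1.const_mul (8 * π * (1/10))).comp (tendsto_id (α := ℕ))
    simpa [mul_zero, pow_succ, Function.comp, mul_comm, mul_assoc, mul_left_comm] using
      (h1.const_mul (8 * π * ((1:ℝ)/10)))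
  -- liminf
  have hbdd : IsBoundedUnder (· ≥ ·) atTop f := Filter.isBoundedUnder_of ⟨0, hf0⟩
  have hle : liminf f atTop ≤ 0 := by
    by_contra hcon
    push_neg at hcon
    set L := liminf f atTop with hL
    have hfreq : ∃ᶠ k in atTop, f k ≤ L/2 := by
      rw [Filter.frequently_atTop]
      intro M
      have := ht.eventually (gt_mem_nhds (by linarith : (0:ℝ) < L/2))
      rw [Filter.eventually_atTop] at this
      obtain ⟨N₀, hN₀⟩ := this
      refine ⟨10 ^ P (max N₀ M), ?_, ?_⟩
      · have h1 : M ≤ max N₀ M + 1 := by omega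
        have h2 : max N₀ M + 1 ≤ P (max N₀ M) := hP1 _
        have h3 : P (max N₀ M) ≤ 10 ^ P (max N₀ M) := (Nat.lt_pow_self (by norm_num)).le
        omega
      · exact (hbound _).trans (hN₀ _ (le_max_left _ _)).le
    have := Filter.liminf_le_of_frequently_le hfreq hbdd
    rw [← hL] at this
    linarith
  have hge : 0 ≤ liminf f atTop := by
    apply Filter.le_liminf_of_le
    · exact Filter.IsBoundedUnder.isCoboundedUnder_ge (Filter.isBoundedUnder_of ⟨2, hf2⟩)
    · exact Filter.Eventually.of_forall hf0
  linarith
end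

section
/- Let α ∈ (0,1) be irrational with liminf_{m→∞} (inf_{n∈ℤ} |α - n/m|)^{1/m} = 0, and set A = e^{2πiα}. Then for any R > 0, the power series Σ_{m≥2} b_m z^m with b_m = (A-1) / (2(1-A^m) R^{m-2} (m-1)) has radius of convergence 0. -/
open Filter Complex Real

/-- If `α` is irrational with `liminf (inf_n |α - n/m|)^{1/m} = 0`, the formal
solution series `∑ b_m z^m` with
`b_m = (A-1)/(2(1-A^m) R^{m-2} (m-1))` has radius of convergence `0`, i.e. it
diverges at every nonzero `z`. -/
theorem formal_solution_divergent (α : ℝ) (hα0 : 0 < α) (hα1 : α < 1)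
    (hirr : Irrational α)
    (hliminf : Filter.liminf
        (fun m : ℕ => (⨅ n : ℤ, |α - (n : ℝ) / (m : ℝ)|) ^ (1 / (m : ℝ)))
        Filter.atTop = 0)
    (A : ℂ) (hA : A = Complex.exp (2 * Real.pi * Complex.I * α))
    (R : ℝ) (hR : 0 < R) :
    ∀ z : ℂ, z ≠ 0 →
      ¬ Summable (fun m : ℕ =>
        (A - 1) / (2 * (1 - A ^ (m + 2)) * (R : ℂ) ^ m * ((m : ℂ) + 1))
          * z ^ (m + 2)) := by
  intro z hz hsum
  set term : ℕ → ℂ := fun m : ℕ =>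
        (A - 1) / (2 * (1 - A ^ (m + 2)) * (R : ℂ) ^ m * ((m : ℂ) + 1))
          * z ^ (m + 2) with hterm
  have hz' : 0 < ‖z‖ := norm_pos_iff.mpr hz
  -- A^m ≠ 1 for m ≥ 1
  have hApow : ∀ m : ℕ, m ≠ 0 → A ^ m ≠ 1 := by
    intro m hm hcon
    rw [hA, ← Complex.exp_nat_mul, Complex.exp_eq_one_iff] at hcon
    obtain ⟨n, hn⟩ := hcon
    have hne : (2 * (π:ℂ) * I) ≠ 0 := by
      simp [Complex.I_ne_zero, Real.pi_ne_zero]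
    have hmα : ((m:ℝ) * α : ℝ) = ((n:ℝ)) := by
      have : ((m:ℂ)) * (α:ℂ) = (n:ℂ) := by
        apply mul_left_cancel₀ hne
        linear_combination hn
      exact_mod_cast this
    have hm0 : (m:ℝ) ≠ 0 := Nat.cast_ne_zero.mpr hm
    exact hirr ⟨(n:ℚ)/(m:ℚ), by push_cast; field_simp; linarith [hmα]⟩
  have hA1 : A ≠ 1 := by
    have := hApow 1 one_ne_zero
    simpa using this
  have hA1' : 0 < ‖A - 1‖ := by
    rw [norm_pos_iff, sub_ne_zero]; exact hA1
  -- choose ε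
  set ε : ℝ := min (‖z‖ / (2 * R)) (1 / 2) with hε
  have hε0 : 0 < ε := lt_min (by positivity) (by norm_num)
  have hεz : (2 * R) * ε ≤ ‖z‖ := by
    have h := min_le_left (‖z‖ / (2 * R)) (1/2)
    rw [← hε] at h
    calc (2*R) * ε ≤ (2*R) * (‖z‖ / (2*R)) := by
          exact mul_le_mul_of_nonneg_left h (by positivity)
      _ = ‖z‖ := by field_simp
  have hεhalf : ε ≤ 1 / 2 := min_le_right _ _
  -- frequently d_m^{1/m} < ε
  set u : ℕ → ℝ := fun m : ℕ => (⨅ n : ℤ, |α - (n : ℝ) / (m : ℝ)|) ^ (1 / (m : ℝ)) with hu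
  have hd_nonneg : ∀ m : ℕ, 0 ≤ ⨅ n : ℤ, |α - (n : ℝ) / (m : ℝ)| := by
    intro m
    exact Real.iInf_nonneg fun n => abs_nonneg _
  have hbdd : ∀ m : ℕ, BddBelow (Set.range fun n : ℤ => |α - (n : ℝ) / (m : ℝ)|) :=
    fun m => ⟨0, by rintro x ⟨n, rfl⟩; exact abs_nonneg _⟩
  have hub : ∀ m : ℕ, u m ≤ 1 := by
    intro m
    have h1 : (⨅ n : ℤ, |α - (n : ℝ) / (m : ℝ)|) ≤ 1 := by
      refine le_trans (ciInf_le (hbdd m) 0) ?_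
      simpa [abs_of_pos hα0] using hα1.le
    exact Real.rpow_le_one (hd_nonneg m) h1 (by positivity)
  have hfreq : ∃ᶠ m : ℕ in atTop, u m < ε := by
    apply frequently_lt_of_liminf_lt (isCoboundedUnder_ge_of_le _ hub)
    rw [hliminf]; exact hε0
  -- summable ⇒ terms → 0
  have h0 : Tendsto (fun k => ‖term k‖) atTop (nhds 0) := by
    have := hsum.tendsto_atTop_zero
    simpa using this.norm
  have hev1 : ∀ᶠ k : ℕ in atTop, ‖term k‖ < 1 :=
    h0.eventually_lt_const one_pos
  have hev1' : ∀ᶠ m : ℕ in atTop, ‖term (m - 2)‖ < 1 :=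
    (tendsto_sub_atTop_nat 2).eventually hev1
  -- growth conditions
  have hgrow1 : ∀ᶠ m : ℕ in atTop, 2 * π * (m:ℝ) * (1/2)^m ≤ 1 := by
    have := tendsto_pow_const_div_const_pow_of_one_lt 1 (by norm_num : (1:ℝ) < 2)
    have h := this.eventually_lt_const (show (0:ℝ) < 1/(2*π) by positivity)
    filter_upwards [h] with m hm
    have h2 : (0:ℝ) < 2^m := by positivity
    rw [div_lt_iff₀ h2] at hm
    have : (1/2:ℝ)^m = 1/2^m := by rw [div_pow]; norm_num
    rw [this]
    rw [pow_one] at hm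
    rw [mul_comm (2*π*(m:ℝ)) _]
    rw [div_mul_eq_mul_div, div_le_one h2]
    calc (1:ℝ) * (2*π*(m:ℝ)) = (m:ℝ) * (2*π) := by ring
      _ ≤ (1/(2*π) * 2^m) * (2*π) := by
          exact mul_le_mul_of_nonneg_right hm.le (by positivity)
      _ = 2^m := by field_simp
  have hgrow2 : ∀ᶠ m : ℕ in atTop, 8 * π * ((m:ℝ) * m) ≤ ‖A - 1‖ * R^2 * 2^m := by
    have := tendsto_pow_const_div_const_pow_of_one_lt 2 (by norm_num : (1:ℝ) < 2)
    have h := this.eventually_lt_const (show (0:ℝ) < ‖A-1‖*R^2/(8*π) by positivity)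
    filter_upwards [h] with m hm
    have h2 : (0:ℝ) < 2^m := by positivity
    rw [div_lt_iff₀ h2] at hm
    have : (m:ℝ) * m = (m:ℝ)^2 := by ring
    rw [this]
    calc 8*π*(m:ℝ)^2 ≤ 8*π*(‖A-1‖*R^2/(8*π) * 2^m) := by
          exact mul_le_mul_of_nonneg_left hm.le (by positivity)
      _ = ‖A-1‖*R^2*2^m := by field_simp
  -- combine
  obtain ⟨m, hum, hm2, hterm1, hg1, hg2⟩ :=
    (hfreq.and_eventually ((eventually_ge_atTop 2).and
      (hev1'.and (hgrow1.and hgrow2)))).exists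
  -- setup k
  set k := m - 2 with hkdef
  have hk : k + 2 = m := by omega
  have hm0 : (m:ℝ) ≠ 0 := Nat.cast_ne_zero.mpr (by omega)
  have hmpos : (0:ℝ) < (m:ℝ) := by positivity
  -- extract n with |α - n/m| < ε^m
  have hd : (⨅ n : ℤ, |α - (n : ℝ) / (m : ℝ)|) < ε ^ m := by
    have heq : (⨅ n : ℤ, |α - (n : ℝ) / (m : ℝ)|) = (u m) ^ m := by
      rw [hu]
      rw [← Real.rpow_natCast ((⨅ n : ℤ, |α - (n : ℝ) / (m : ℝ)|) ^ (1/(m:ℝ))) m,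
        ← Real.rpow_mul (hd_nonneg m), one_div, inv_mul_cancel₀ hm0, Real.rpow_one]
    rw [heq]
    exact pow_lt_pow_left₀ hum (Real.rpow_nonneg (hd_nonneg m) _) (by omega)
  obtain ⟨n, hn⟩ := exists_lt_of_ciInf_lt hd
  have habs : |(m:ℝ) * α - (n:ℝ)| < (m:ℝ) * ε ^ m := by
    have he : (m:ℝ) * α - n = (m:ℝ) * (α - (n:ℝ)/(m:ℝ)) := by field_simp
    rw [he, abs_mul, abs_of_pos hmpos]
    exact mul_lt_mul_of_pos_left hn hmpos
  -- A^m as exp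
  have hAmeq : A ^ m = Complex.exp (2 * (π:ℂ) * I * (((m:ℝ) * α - (n:ℝ) : ℝ) : ℂ)) := by
    rw [hA, ← Complex.exp_nat_mul, Complex.exp_eq_exp_iff_exists_int]
    refine ⟨n, ?_⟩
    push_cast
    all_goals ring
  have hwabs : ‖(2 * (π:ℂ) * I * (((m:ℝ) * α - (n:ℝ) : ℝ) : ℂ))‖
      = 2 * π * |(m:ℝ) * α - (n:ℝ)| := by
    have h2pi : ‖(2 * (π:ℂ) * I)‖ = 2 * π := by
      rw [norm_mul, norm_mul, Complex.norm_two, Complex.norm_I, Complex.norm_real, Real.norm_eq_abs,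
        abs_of_pos Real.pi_pos, mul_one]
    rw [norm_mul, h2pi, Complex.norm_real, Real.norm_eq_abs]
  have hεm_half : ε ^ m ≤ (1/2:ℝ) ^ m := pow_le_pow_left₀ hε0.le hεhalf m
  have hwsmall : ‖(2 * (π:ℂ) * I * (((m:ℝ) * α - (n:ℝ) : ℝ) : ℂ))‖ ≤ 1 := by
    rw [hwabs]
    calc 2 * π * |(m:ℝ) * α - (n:ℝ)| ≤ 2 * π * ((m:ℝ) * ε ^ m) := by
          exact mul_le_mul_of_nonneg_left habs.le (by positivity)
      _ ≤ 2 * π * ((m:ℝ) * (1/2:ℝ)^m) := by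
          have := mul_le_mul_of_nonneg_left hεm_half (le_of_lt hmpos)
          exact mul_le_mul_of_nonneg_left this (by positivity)
      _ = 2 * π * (m:ℝ) * (1/2:ℝ)^m := by ring
      _ ≤ 1 := hg1
  set N := ‖1 - A ^ m‖ with hNdef
  have hNpos : 0 < N := by
    rw [hNdef, norm_pos_iff, sub_ne_zero]
    exact (hApow m (by omega)).symm
  have hNle : N ≤ 4 * π * ((m:ℝ) * ε ^ m) := by
    rw [hNdef, norm_sub_rev, hAmeq]
    calc ‖Complex.exp (2 * (π:ℂ) * I * (((m:ℝ) * α - (n:ℝ) : ℝ) : ℂ)) - 1‖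
        ≤ 2 * ‖(2 * (π:ℂ) * I * (((m:ℝ) * α - (n:ℝ) : ℝ) : ℂ))‖ := by
          exact Complex.norm_exp_sub_one_le hwsmall
      _ = 2 * (2 * π * |(m:ℝ) * α - (n:ℝ)|) := by rw [hwabs]
      _ ≤ 2 * (2 * π * ((m:ℝ) * ε ^ m)) := by
          have := mul_le_mul_of_nonneg_left habs.le (show (0:ℝ) ≤ 2*π by positivity)
          linarith
      _ = 4 * π * ((m:ℝ) * ε ^ m) := by ring
  -- norm of term k
  have hter : ‖term k‖ = (‖A - 1‖ * ‖z‖ ^ m) / (2 * N * R ^ k * ((k:ℝ) + 1)) := by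
    have hcast : ((k:ℂ) + 1) = ((k + 1 : ℕ) : ℂ) := by push_cast; ring
    simp only [hterm, hk, norm_mul, norm_div, norm_pow, hcast, hNdef]
    rw [Complex.norm_natCast, Complex.norm_real, Real.norm_eq_abs, abs_of_pos hR]
    rw [Complex.norm_ofNat]
    push_cast
    ring
  have hdenpos : 0 < 2 * N * R ^ k * ((k:ℝ) + 1) :=
    mul_pos (mul_pos (mul_pos two_pos hNpos) (pow_pos hR k)) (by positivity)
  have hRk : R ^ k * R ^ 2 = R ^ m := by rw [← hk, pow_add]
  have hk1m : (k:ℝ) + 1 ≤ (m:ℝ) := by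
    have : k + 1 ≤ m := by omega
    exact_mod_cast this
  have hzpow : (2 * R * ε) ^ m ≤ ‖z‖ ^ m :=
    pow_le_pow_left₀ (by positivity) hεz m
  have hmain : (2 * N * R ^ k * ((k:ℝ) + 1)) * (2 ^ m * R ^ 2)
      ≤ (‖A - 1‖ * ‖z‖ ^ m) * (2 ^ m * R ^ 2) := by
    calc (2 * N * R ^ k * ((k:ℝ) + 1)) * (2 ^ m * R ^ 2)
        ≤ (2 * (4 * π * ((m:ℝ) * ε ^ m)) * R ^ k * (m:ℝ)) * (2 ^ m * R ^ 2) := by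
          gcongr
      _ = (8 * π * ((m:ℝ) * m)) * (2 ^ m * ε ^ m * (R ^ k * R ^ 2)) := by ring
      _ = (8 * π * ((m:ℝ) * m)) * ((2 * R * ε) ^ m) := by
          rw [hRk, mul_pow, mul_pow]; ring
      _ ≤ (8 * π * ((m:ℝ) * m)) * ‖z‖ ^ m :=
          mul_le_mul_of_nonneg_left hzpow (by positivity)
      _ ≤ (‖A - 1‖ * R ^ 2 * 2 ^ m) * ‖z‖ ^ m :=
          mul_le_mul_of_nonneg_right hg2 (by positivity)
      _ = (‖A - 1‖ * ‖z‖ ^ m) * (2 ^ m * R ^ 2) := by ring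
  have hkey : 2 * N * R ^ k * ((k:ℝ) + 1) ≤ ‖A - 1‖ * ‖z‖ ^ m :=
    le_of_mul_le_mul_right hmain (by positivity)
  have hone : 1 ≤ ‖term k‖ := by
    rw [hter, le_div_iff₀ hdenpos, one_mul]
    exact hkey
  linarith [hterm1, hone]
end
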